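/- Let X be a metric space, ε > 0, N ≥ 1 a natural number, and (x_i)_{i ∈ ι} a family of points of X such that the family of open balls (B(x_i, 2ε))_{i ∈ ι} has multiplicity at most N. Then there exists a coloring c : ι → Fin N with finitely many colors such that whenever i ≠ j and B(x_i, ε) ∩ B(x_j, ε) ≠ ∅, the colors satisfy c(i) ≠ c(j); that is, no two intersecting balls of the family (B(x_i, ε))_{i ∈ ι} have the same color. -/

import Mathlib

open SimpleGraph

/-- Greedy coloring: a finite graph whose every vertex has fewer than `N` neighbors
admits a homomorphism to the complete graph on `Fin N`. -/
lemma greedy_coloring (N : ℕ) : ∀ (n : ℕ) (V : Type*) [Fintype V] (G : SimpleGraph V),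
    Fintype.card V = n → (∀ v, (G.neighborSet v).encard < (N : ℕ∞)) →
    Nonempty (G →g completeGraph (Fin N)) := by
  intro n
  induction n with
  | zero =>
    intro V _ G hcard _
    have : IsEmpty V := Fintype.card_eq_zero_iff.mp hcard
    exact ⟨⟨fun v => this.elim v, fun {a b} h => (this.elim a)⟩⟩
  | succ n ih =>
    intro V _ G hcard hdeg
    have hne : Nonempty V := Fintype.card_pos_iff.mp (by omega)
    classical
    obtain ⟨v0⟩ := hne
    set V' := {u : V // u ≠ v0}
    have hcard' : Fintype.card V' = n := by
      simp [V', Fintype.card_subtype_compl, hcard]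
    let G' : SimpleGraph V' := G.comap Subtype.val
    have hdeg' : ∀ v : V', (G'.neighborSet v).encard < (N : ℕ∞) := by
      intro v
      refine lt_of_le_of_lt ?_ (hdeg v.val)
      have hinj : Set.InjOn (Subtype.val : V' → V) (G'.neighborSet v) :=
        Subtype.val_injective.injOn
      calc (G'.neighborSet v).encard = (Subtype.val '' G'.neighborSet v).encard :=
            (hinj.encard_image).symm
        _ ≤ (G.neighborSet v.val).encard := by
            apply Set.encard_le_encard
            rintro _ ⟨u, hu, rfl⟩
            exact hu
    obtain ⟨c'⟩ := ih V' G' hcard' hdeg'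
    -- find an unused color for v0
    set T : Set V' := {u : V' | G.Adj v0 u.val}
    have hT : T.encard < (N : ℕ∞) := by
      refine lt_of_le_of_lt ?_ (hdeg v0)
      have hinj : Set.InjOn (Subtype.val : V' → V) T := Subtype.val_injective.injOn
      calc T.encard = (Subtype.val '' T).encard := (hinj.encard_image).symm
        _ ≤ (G.neighborSet v0).encard := by
            apply Set.encard_le_encard
            rintro _ ⟨u, hu, rfl⟩
            exact hu
    have : ∃ k : Fin N, k ∉ c' '' T := by
      by_contra h
      push_neg at h
      have huniv : c' '' T = Set.univ := Set.eq_univ_of_forall h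
      have h1 : (c' '' T).encard ≤ T.encard := Set.encard_image_le _ _
      have h2 : (Set.univ : Set (Fin N)).encard = (N : ℕ∞) := by
        simp [Set.encard_univ]
      rw [huniv, h2] at h1
      exact absurd (lt_of_le_of_lt h1 hT) (lt_irrefl _)
    obtain ⟨k, hk⟩ := this
    refine ⟨⟨fun v => if h : v = v0 then k else c' ⟨v, h⟩, ?_⟩⟩
    intro a b hab
    split_ifs with ha hb hb
    · exact absurd (ha ▸ hb ▸ hab) (G.loopless.irrefl _)
    · -- a = v0, b ≠ v0
      subst ha
      intro hcontra
      exact hk ⟨⟨b, hb⟩, hab, hcontra.symm⟩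
    · subst hb
      intro hcontra
      exact hk ⟨⟨a, ha⟩, hab.symm, hcontra⟩
    · have : G'.Adj ⟨a, ha⟩ ⟨b, hb⟩ := hab
      exact c'.map_rel this

/-- If the family of doubled balls `B(x i, 2ε)` has multiplicity at most `N`,
then there is a coloring of the index set with `N` colors such that no two
distinct intersecting `ε`-balls of the family receive the same color. -/
theorem ball_coloring_of_multiplicity {X : Type*} [MetricSpace X] {ι : Type*}
    (ε : ℝ) (hε : 0 < ε) (N : ℕ) (hN : 1 ≤ N) (x : ι → X)
    (hmult : ∀ y : X, {i : ι | y ∈ Metric.ball (x i) (2 * ε)}.encard ≤ (N : ℕ∞)) :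
    ∃ c : ι → Fin N, ∀ i j : ι, i ≠ j →
      (Metric.ball (x i) ε ∩ Metric.ball (x j) ε).Nonempty → c i ≠ c j := by
  classical
  let G : SimpleGraph ι :=
    { Adj := fun i j => i ≠ j ∧ (Metric.ball (x i) ε ∩ Metric.ball (x j) ε).Nonempty
      symm := by
        constructor
        rintro i j ⟨hij, y, hy1, hy2⟩
        exact ⟨hij.symm, y, hy2, hy1⟩
      loopless := ⟨fun i h => h.1 rfl⟩ }
  -- each vertex has fewer than N neighbors
  have hdeg : ∀ i : ι, (G.neighborSet i).encard < (N : ℕ∞) := by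
    intro i
    set S : Set ι := {j : ι | x i ∈ Metric.ball (x j) (2 * ε)}
    have hiS : i ∈ S := by
      exact Metric.mem_ball_self (by linarith)
    have hsub : G.neighborSet i ⊆ S \ {i} := by
      rintro j ⟨hij, y, hy1, hy2⟩
      refine ⟨?_, fun h => hij (h : j = i).symm⟩
      simp only [S, Set.mem_setOf_eq, Metric.mem_ball] at *
      have := dist_triangle (x i) y (x j)
      rw [dist_comm (x i) y] at this
      linarith
    have h1 : (S \ {i}).encard + 1 ≤ (N : ℕ∞) := by
      rw [Set.encard_diff_singleton_add_one hiS]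
      exact hmult (x i)
    have h2 : (S \ {i}).encard < (N : ℕ∞) := by
      rcases eq_or_ne ((S \ {i}).encard) ⊤ with h | h
      · rw [h] at h1; simp at h1
      · exact (ENat.add_one_le_iff h).mp h1
    exact lt_of_le_of_lt (Set.encard_le_encard hsub) h2
  -- compactness: every finite subgraph is N-colorable
  have : Nonempty (G →g completeGraph (Fin N)) := by
    apply nonempty_hom_of_forall_finite_subgraph_hom
    intro G' hfin
    haveI : Fintype ↥G'.verts := hfin.fintype
    have hdeg' : ∀ v : ↥G'.verts, (G'.coe.neighborSet v).encard < (N : ℕ∞) := by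
      intro v
      refine lt_of_le_of_lt ?_ (hdeg v.val)
      have hinj : Set.InjOn (Subtype.val : ↥G'.verts → ι) (G'.coe.neighborSet v) :=
        Subtype.val_injective.injOn
      calc (G'.coe.neighborSet v).encard = (Subtype.val '' G'.coe.neighborSet v).encard :=
            (hinj.encard_image).symm
        _ ≤ (G.neighborSet v.val).encard := by
            apply Set.encard_le_encard
            rintro _ ⟨u, hu, rfl⟩
            exact G'.adj_sub hu
    exact (greedy_coloring N (Fintype.card ↥G'.verts) ↥G'.verts G'.coe rfl hdeg').some
  obtain ⟨f⟩ := this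
  exact ⟨f, fun i j hij hball => f.map_rel ⟨hij, hball⟩⟩
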